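/- Let n, B be positive integers with B ≤ n, and write n = q·B + r by Euclidean division (q ≥ 1, 0 ≤ r < B). Over all allocations (n_1,…,n_B) of positive integers with ∑_{b=1}^B n_b = n, the A-optimality criterion ∑_{b=1}^B n_b^{−1} is minimized exactly by the allocations in which B−r entries equal q and r entries equal q+1, with minimum value (B−r)/q + r/(q+1). Consequently the minimizers of ∑_b n_b^{−1} coincide exactly with the maximizers of ∏_b n_b: D-optimality and A-optimality are equivalent in the tree regression setting. -/

import Mathlib

open Finset

/-- Per-term secant inequality for `x⁻¹` at integers, with equality cases. -/
lemma aux_recip (q m : ℕ) (hq : 0 < q) (hm : 0 < m) :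
    (1:ℝ)/q - ((m:ℝ) - q)/(q*(q+1)) ≤ (m:ℝ)⁻¹ ∧
    ((1:ℝ)/q - ((m:ℝ) - q)/(q*(q+1)) = (m:ℝ)⁻¹ ↔ m = q ∨ m = q + 1) := by
  have hq' : (0:ℝ) < q := by exact_mod_cast hq
  have hm' : (0:ℝ) < m := by exact_mod_cast hm
  have hkey : (m:ℝ)⁻¹ - ((1:ℝ)/q - ((m:ℝ) - q)/(q*(q+1)))
      = (((m:ℝ) - q) * ((m:ℝ) - q - 1)) / (m * q * (q+1)) := by
    field_simp
    ring
  have hint : (0:ℤ) ≤ ((m:ℤ) - q) * ((m:ℤ) - q - 1) := by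
    rcases le_or_gt ((m:ℤ) - q) 0 with h | h
    · nlinarith
    · nlinarith
  have hnum : (0:ℝ) ≤ ((m:ℝ) - q) * ((m:ℝ) - q - 1) := by exact_mod_cast hint
  have hden : (0:ℝ) < (m:ℝ) * q * (q+1) := by positivity
  have hfrac : 0 ≤ (((m:ℝ) - q) * ((m:ℝ) - q - 1)) / (m * q * (q+1)) :=
    div_nonneg hnum hden.le
  refine ⟨by linarith, ?_, ?_⟩
  · intro h
    have h0 : (((m:ℝ) - q) * ((m:ℝ) - q - 1)) / ((m:ℝ) * q * (q+1)) = 0 := by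
      rw [← hkey, h, sub_self]
    have h1 : ((m:ℝ) - q) * ((m:ℝ) - q - 1) = 0 := by
      rcases div_eq_zero_iff.mp h0 with h' | h'
      · exact h'
      · exact absurd h' hden.ne'
    have h2 : ((m:ℤ) - q) * ((m:ℤ) - q - 1) = 0 := by exact_mod_cast h1
    rcases mul_eq_zero.mp h2 with h' | h'
    · left; omega
    · right; omega
  · rintro (rfl | rfl)
    · field_simp
      ring
    · push_cast
      field_simp
      ring

/-- Per-term secant inequality for `log` at integers, with equality cases. -/
lemma aux_log (q m : ℕ) (hq : 0 < q) (hm : 0 < m) :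
    Real.log m ≤ Real.log q + ((m:ℝ) - q) * (Real.log (q+1) - Real.log q) ∧
    (Real.log m = Real.log q + ((m:ℝ) - q) * (Real.log (q+1) - Real.log q) ↔
      m = q ∨ m = q + 1) := by
  have hq' : (0:ℝ) < q := by exact_mod_cast hq
  have hm' : (0:ℝ) < m := by exact_mod_cast hm
  have hq1 : (0:ℝ) < (q:ℝ) + 1 := by linarith
  obtain ⟨Δ, hΔ⟩ : ∃ d : ℝ, Real.log ((q:ℝ)+1) - Real.log q = d := ⟨_, rfl⟩
  rw [show Real.log ((q:ℝ)+1) - Real.log (q:ℝ) = Δ from hΔ]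
  have hub : Δ < 1/q := by
    have h1 : Real.log (((q:ℝ)+1)/q) < ((q:ℝ)+1)/q - 1 := by
      apply Real.log_lt_sub_one_of_pos (by positivity)
      intro h
      rw [div_eq_one_iff_eq hq'.ne'] at h
      linarith
    rw [Real.log_div hq1.ne' hq'.ne'] at h1
    have h2 : ((q:ℝ)+1)/q - 1 = 1/q := by field_simp; ring
    rw [h2, hΔ] at h1
    exact h1
  have hlb : 1/((q:ℝ)+1) < Δ := by
    have h1 : Real.log ((q:ℝ)/(q+1)) < (q:ℝ)/(q+1) - 1 := by
      apply Real.log_lt_sub_one_of_pos (by positivity)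
      intro h
      rw [div_eq_one_iff_eq hq1.ne'] at h
      linarith
    rw [Real.log_div hq'.ne' hq1.ne'] at h1
    have h2 : (q:ℝ)/(q+1) - 1 = -(1/((q:ℝ)+1)) := by field_simp; ring
    rw [h2] at h1
    linarith [hΔ]
  have tangent : ∀ a : ℝ, 0 < a → Real.log m ≤ Real.log a + ((m:ℝ) - a)/a := by
    intro a ha
    have h1 := Real.log_le_sub_one_of_pos (show (0:ℝ) < (m:ℝ)/a by positivity)
    rw [Real.log_div hm'.ne' ha.ne'] at h1
    have h2 : (m:ℝ)/a - 1 = ((m:ℝ) - a)/a := by field_simp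
    linarith
  rcases Nat.lt_or_ge m q with hlt | hge
  · -- m < q : strict inequality
    have hmq : (m:ℝ) - q ≤ -1 := by
      have h : m + 1 ≤ q := hlt
      have h' : (m:ℝ) + 1 ≤ q := by exact_mod_cast h
      linarith
    have t := tangent q hq'
    have hstep : ((m:ℝ) - q)/q < ((m:ℝ) - q) * Δ := by
      rw [div_eq_mul_one_div]
      have : Δ - 1/(q:ℝ) < 0 := by linarith
      nlinarith
    have hstrict : Real.log m < Real.log q + ((m:ℝ) - q) * Δ := by linarith
    refine ⟨hstrict.le, ?_, ?_⟩
    · intro h; linarith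
    · rintro (h | h) <;> omega
  rcases Nat.lt_or_ge (q+1) m with hgt | hle
  · -- m ≥ q + 2 : strict inequality
    have hmq : (1:ℝ) ≤ (m:ℝ) - ((q:ℝ)+1) := by
      have h : q + 2 ≤ m := hgt
      have h' : (q:ℝ) + 2 ≤ m := by exact_mod_cast h
      linarith
    have t := tangent ((q:ℝ)+1) hq1
    have hstep : ((m:ℝ) - ((q:ℝ)+1))/((q:ℝ)+1) < ((m:ℝ) - ((q:ℝ)+1)) * Δ := by
      rw [div_eq_mul_one_div]
      have : 1/((q:ℝ)+1) < Δ := hlb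
      nlinarith
    have hexp : ((m:ℝ) - q) * Δ = Δ + ((m:ℝ) - ((q:ℝ)+1)) * Δ := by ring
    have hlogq1 : Real.log ((q:ℝ)+1) = Real.log q + Δ := by rw [← hΔ]; ring
    have hstrict : Real.log m < Real.log q + ((m:ℝ) - q) * Δ := by
      rw [hexp]; linarith
    refine ⟨hstrict.le, ?_, ?_⟩
    · intro h; linarith
    · rintro (h | h) <;> omega
  · -- q ≤ m ≤ q + 1
    have hcase : m = q ∨ m = q + 1 := by omega
    have heq : Real.log m = Real.log q + ((m:ℝ) - q) * Δ := by
      rcases hcase with rfl | rfl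
      · rw [sub_self, zero_mul, add_zero]
      · push_cast
        rw [← hΔ]
        ring
    exact ⟨heq.le, fun _ => hcase, fun _ => heq⟩

/-- For `B ≤ n` with `n = q·B + r` by Euclidean division, over all
allocations of positive integers summing to `n`, the A-optimality criterion `∑ b, (n b)⁻¹`
is at least `(B-r)/q + r/(q+1)`, with equality exactly for the allocations with `B - r`
entries equal to `q` and `r` entries equal to `q + 1`; these are exactly the maximizers of
`∏ b, n b`, so D-optimality and A-optimality are equivalent. -/
theorem stmt16 (n B q r : ℕ) (hn : 0 < n) (hB : 0 < B) (hBn : B ≤ n)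
    (hq : q = n / B) (hr : r = n % B) :
    (∀ ν : Fin B → ℕ, (∀ b, 0 < ν b) → ∑ b, ν b = n →
      ((B : ℝ) - r) / q + (r : ℝ) / (q + 1) ≤ ∑ b, ((ν b : ℝ))⁻¹) ∧
    (∀ ν : Fin B → ℕ, (∀ b, 0 < ν b) → ∑ b, ν b = n →
      (∑ b, ((ν b : ℝ))⁻¹ = ((B : ℝ) - r) / q + (r : ℝ) / (q + 1) ↔
        ((univ.filter fun b => ν b = q).card = B - r ∧
          (univ.filter fun b => ν b = q + 1).card = r))) ∧
    (∀ ν : Fin B → ℕ, (∀ b, 0 < ν b) → ∑ b, ν b = n →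
      (∑ b, ((ν b : ℝ))⁻¹ = ((B : ℝ) - r) / q + (r : ℝ) / (q + 1) ↔
        ∏ b, ν b = q ^ (B - r) * (q + 1) ^ r)) := by
  have hq1 : 1 ≤ q := by rw [hq]; exact (Nat.one_le_div_iff hB).mpr hBn
  have hrB : r < B := by rw [hr]; exact Nat.mod_lt n hB
  have hnd : B * q + r = n := by rw [hq, hr]; exact Nat.div_add_mod n B
  have hq' : (0:ℝ) < q := by exact_mod_cast hq1
  have hq1' : (0:ℝ) < (q:ℝ) + 1 := by linarith
  have hnR : (n:ℝ) = (B:ℝ) * q + r := by exact_mod_cast hnd.symm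
  -- main inequality with equality characterized by the dichotomy
  have main : ∀ ν : Fin B → ℕ, (∀ b, 0 < ν b) → ∑ b, ν b = n →
      (((B : ℝ) - r) / q + (r : ℝ) / (q + 1) ≤ ∑ b, ((ν b : ℝ))⁻¹ ∧
      (∑ b, ((ν b : ℝ))⁻¹ = ((B : ℝ) - r) / q + (r : ℝ) / (q + 1) ↔
        ∀ b, ν b = q ∨ ν b = q + 1)) := by
    intro ν hpos hsum
    have hsum' : ∑ b, ((ν b : ℝ)) = (n:ℝ) := by
      rw [← Nat.cast_sum, hsum]
    have hle : ∀ b ∈ (univ : Finset (Fin B)),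
        (1:ℝ)/q - ((ν b:ℝ) - q)/(q*(q+1)) ≤ ((ν b:ℝ))⁻¹ :=
      fun b _ => (aux_recip q (ν b) hq1 (hpos b)).1
    have hVsum : ∑ b, ((1:ℝ)/q - ((ν b:ℝ) - q)/(q*(q+1)))
        = ((B : ℝ) - r) / q + (r : ℝ) / (q + 1) := by
      rw [Finset.sum_sub_distrib, Finset.sum_const, Finset.card_univ, Fintype.card_fin,
        ← Finset.sum_div, Finset.sum_sub_distrib, hsum', Finset.sum_const,
        Finset.card_univ, Fintype.card_fin, hnR]
      simp only [nsmul_eq_mul]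
      field_simp
      ring
    constructor
    · calc ((B : ℝ) - r) / q + (r : ℝ) / (q + 1)
          = ∑ b, ((1:ℝ)/q - ((ν b:ℝ) - q)/(q*(q+1))) := hVsum.symm
        _ ≤ ∑ b, ((ν b : ℝ))⁻¹ := Finset.sum_le_sum hle
    · rw [← hVsum, eq_comm, Finset.sum_eq_sum_iff_of_le hle]
      constructor
      · intro h b
        exact (aux_recip q (ν b) hq1 (hpos b)).2.mp (h b (mem_univ b))
      · intro h b _
        exact (aux_recip q (ν b) hq1 (hpos b)).2.mpr (h b)
  -- dichotomy ↔ counts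
  have counts : ∀ ν : Fin B → ℕ, ∑ b, ν b = n →
      ((∀ b, ν b = q ∨ ν b = q + 1) ↔
        ((univ.filter fun b => ν b = q).card = B - r ∧
          (univ.filter fun b => ν b = q + 1).card = r)) := by
    intro ν hsum
    constructor
    · intro hall
      have hfilt : (univ.filter fun b => ν b = q)
          = (univ.filter fun b => ¬ ν b = q + 1) := by
        ext b
        simp only [mem_filter, mem_univ, true_and]
        rcases hall b with h | h <;> simp [h]
      have hcards : ((univ.filter fun b => ν b = q + 1)).card
          + ((univ.filter fun b => ¬ ν b = q + 1)).card = B := by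
        rw [Finset.card_filter_add_card_filter_not, Finset.card_univ,
          Fintype.card_fin]
      have hsplit : ∑ b ∈ univ.filter (fun b => ν b = q + 1), ν b
          + ∑ b ∈ univ.filter (fun b => ¬ ν b = q + 1), ν b = n := by
        rw [Finset.sum_filter_add_sum_filter_not, hsum]
      have h1 : ∑ b ∈ univ.filter (fun b => ν b = q + 1), ν b
          = ((univ.filter fun b => ν b = q + 1)).card * (q + 1) := by
        rw [Finset.sum_congr rfl (fun b hb => (mem_filter.mp hb).2),
          Finset.sum_const, smul_eq_mul]
      have h2 : ∑ b ∈ univ.filter (fun b => ¬ ν b = q + 1), ν b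
          = ((univ.filter fun b => ¬ ν b = q + 1)).card * q := by
        rw [Finset.sum_congr rfl (fun b hb => ?_), Finset.sum_const, smul_eq_mul]
        rcases hall b with h | h
        · exact h
        · exact absurd h (mem_filter.mp hb).2
      rw [h1, h2] at hsplit
      have hkey : ((univ.filter fun b => ν b = q + 1)).card * (q + 1)
          + ((univ.filter fun b => ¬ ν b = q + 1)).card * q
          = ((univ.filter fun b => ν b = q + 1)).card
          + (((univ.filter fun b => ν b = q + 1)).card
            + ((univ.filter fun b => ¬ ν b = q + 1)).card) * q := by ring
      rw [hkey, hcards] at hsplit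
      have h5 : r + B * q = n := by rw [← hnd]; ring
      have h7 : ((univ.filter fun b => ν b = q + 1)).card = r :=
        Nat.add_right_cancel (hsplit.trans h5.symm)
      constructor
      · rw [hfilt]; omega
      · exact h7
    · rintro ⟨h1, h2⟩ b
      have hdisj : Disjoint (univ.filter fun b => ν b = q)
          (univ.filter fun b => ν b = q + 1) := by
        rw [Finset.disjoint_left]
        intro a ha hb
        simp only [mem_filter] at ha hb
        omega
      have hcard : ((univ.filter fun b => ν b = q)
          ∪ (univ.filter fun b => ν b = q + 1)).card = Fintype.card (Fin B) := by
        rw [Finset.card_union_of_disjoint hdisj, h1, h2, Fintype.card_fin]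
        omega
      have huniv := Finset.eq_univ_of_card _ hcard
      have hb : b ∈ (univ.filter fun b => ν b = q)
          ∪ (univ.filter fun b => ν b = q + 1) := by rw [huniv]; exact mem_univ b
      simp only [mem_union, mem_filter, mem_univ, true_and] at hb
      exact hb
  -- dichotomy ↔ product value
  have prodchar : ∀ ν : Fin B → ℕ, (∀ b, 0 < ν b) → ∑ b, ν b = n →
      ((∀ b, ν b = q ∨ ν b = q + 1) ↔ ∏ b, ν b = q ^ (B - r) * (q + 1) ^ r) := by
    intro ν hpos hsum
    constructor
    · intro hall
      obtain ⟨h1, h2⟩ := (counts ν hsum).mp hall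
      have hfilt : (univ.filter fun b => ¬ ν b = q + 1)
          = (univ.filter fun b => ν b = q) := by
        ext b
        simp only [mem_filter, mem_univ, true_and]
        rcases hall b with h | h <;> simp [h]
      rw [← Finset.prod_filter_mul_prod_filter_not univ (fun b => ν b = q + 1)]
      rw [Finset.prod_congr rfl (fun b hb => (mem_filter.mp hb).2),
        Finset.prod_const, h2, hfilt,
        Finset.prod_congr rfl (fun b hb => (mem_filter.mp hb).2),
        Finset.prod_const, h1, mul_comm]
    · intro hprod
      -- use the log argument
      have hne : ∀ b ∈ (univ : Finset (Fin B)), ((ν b : ℝ)) ≠ 0 := by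
        intro b _
        have := hpos b
        positivity
      have hlogprod : ∑ b, Real.log (ν b) = Real.log (∏ b, (ν b : ℝ)) :=
        (Real.log_prod hne).symm
      have hprodR : (∏ b, ((ν b : ℝ))) = (q:ℝ) ^ (B - r) * ((q:ℝ) + 1) ^ r := by
        rw [← Nat.cast_prod, hprod]
        push_cast
        ring
      have hBr : ((B - r : ℕ) : ℝ) = (B:ℝ) - r := by
        have : r ≤ B := hrB.le
        push_cast [this]
        ring
      have hlogval : Real.log (∏ b, (ν b : ℝ))
          = ((B:ℝ) - r) * Real.log q + (r:ℝ) * Real.log ((q:ℝ)+1) := by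
        rw [hprodR, Real.log_mul (by positivity) (by positivity),
          Real.log_pow, Real.log_pow, hBr]
      have hle : ∀ b ∈ (univ : Finset (Fin B)),
          Real.log (ν b) ≤ Real.log q + ((ν b:ℝ) - q) * (Real.log ((q:ℝ)+1) - Real.log q) :=
        fun b _ => (aux_log q (ν b) hq1 (hpos b)).1
      have hsum' : ∑ b, ((ν b : ℝ)) = (n:ℝ) := by
        rw [← Nat.cast_sum, hsum]
      have hUsum : ∑ b, (Real.log q + ((ν b:ℝ) - q) * (Real.log ((q:ℝ)+1) - Real.log q))
          = ((B:ℝ) - r) * Real.log q + (r:ℝ) * Real.log ((q:ℝ)+1) := by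
        rw [Finset.sum_add_distrib, Finset.sum_const, Finset.card_univ, Fintype.card_fin,
          ← Finset.sum_mul, Finset.sum_sub_distrib, hsum', Finset.sum_const,
          Finset.card_univ, Fintype.card_fin, hnR]
        simp only [nsmul_eq_mul]
        ring
      have heq : ∑ b, Real.log (ν b)
          = ∑ b, (Real.log q + ((ν b:ℝ) - q) * (Real.log ((q:ℝ)+1) - Real.log q)) := by
        rw [hUsum, hlogprod, hlogval]
      intro b
      exact (aux_log q (ν b) hq1 (hpos b)).2.mp
        (((Finset.sum_eq_sum_iff_of_le hle).mp heq) b (mem_univ b))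
  refine ⟨fun ν hpos hsum => (main ν hpos hsum).1,
    fun ν hpos hsum => ((main ν hpos hsum).2).trans (counts ν hsum),
    fun ν hpos hsum => ((main ν hpos hsum).2).trans (prodchar ν hpos hsum)⟩
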